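/- Let S : ℕ → ℝ satisfy S(N^n) = n·S(N) for all N, n ≥ 1 and be strictly monotone increasing. Fix N ≥ 2, and for each n let m(n) be the unique natural number with 2^(m(n)) ≤ N^n < 2^(m(n)+1). Then lim_{n→∞} m(n)/n = log N / log 2, and consequently S(N) = S(2) · (log N / log 2). -/

import Mathlib

open Filter

private lemma squeeze_aux_cal (f : ℕ → ℝ) (a : ℝ)
    (h : ∀ n : ℕ, 1 ≤ n → a - 1/n ≤ f n ∧ f n ≤ a + 1/n) :
    Tendsto f atTop (nhds a) := by
  have h1 : Tendsto (fun n : ℕ => a - 1/n) atTop (nhds a) := by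
    simpa using (tendsto_const_nhds : Tendsto (fun _ : ℕ => a) atTop (nhds a)).sub tendsto_one_div_atTop_nhds_zero_nat
  have h2 : Tendsto (fun n : ℕ => a + 1/n) atTop (nhds a) := by
    simpa using (tendsto_const_nhds : Tendsto (fun _ : ℕ => a) atTop (nhds a)).add tendsto_one_div_atTop_nhds_zero_nat
  refine tendsto_of_tendsto_of_tendsto_of_le_of_le' h1 h2 ?_ ?_
  · filter_upwards [eventually_ge_atTop 1] with n hn using (h n hn).1
  · filter_upwards [eventually_ge_atTop 1] with n hn using (h n hn).2

/-- Squeeze argument: comparing powers of `N` with powers of `2`, extensivity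
`S(N^n) = n·S(N)` and strict monotonicity pin down `S(N)` from `S(2)`. -/
theorem squeeze_calibration (S : ℕ → ℝ)
    (hpow : ∀ N n : ℕ, 1 ≤ N → 1 ≤ n → S (N ^ n) = n * S N)
    (hmono : StrictMono S)
    (N : ℕ) (hN : 2 ≤ N)
    (m : ℕ → ℕ) (hm : ∀ n : ℕ, 2 ^ (m n) ≤ N ^ n ∧ N ^ n < 2 ^ (m n + 1)) :
    Tendsto (fun n : ℕ => (m n : ℝ) / n) atTop (nhds (Real.log N / Real.log 2)) ∧
      S N = S 2 * (Real.log N / Real.log 2) := by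
  have hS1 : S 1 = 0 := by
    have := hpow 1 2 le_rfl (by norm_num)
    simp at this
    linarith
  have hS2 : 0 < S 2 := hS1 ▸ hmono (by norm_num)
  have hlog2 : 0 < Real.log 2 := Real.log_pos one_lt_two
  set L := Real.log N / Real.log 2 with hL
  set r := S N / S 2 with hr
  -- generic squeeze: if m n * c ≤ dn and dn < (m n + 1) * c with dn = n * d,
  -- then m n / n → d / c.  We instantiate twice.
  have key : ∀ (c d : ℝ), 0 < c →
      (∀ n : ℕ, 1 ≤ n → (m n : ℝ) * c ≤ n * d ∧ (n : ℝ) * d < ((m n : ℝ) + 1) * c) →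
      Tendsto (fun n : ℕ => (m n : ℝ) / n) atTop (nhds (d / c)) := by
    intro c d hc hcd
    apply squeeze_aux_cal
    intro n hn
    have hnpos : (0:ℝ) < n := by exact_mod_cast hn
    obtain ⟨h1, h2⟩ := hcd n hn
    have hub : (m n : ℝ) ≤ (d / c) * n := by
      rw [div_mul_eq_mul_div, le_div_iff₀ hc]; nlinarith
    have hlb : (d / c) * n ≤ (m n : ℝ) + 1 := by
      rw [div_mul_eq_mul_div, div_le_iff₀ hc]; nlinarith
    constructor
    · have h1' : d / c ≤ ((m n : ℝ) + 1) / n := by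
        rw [le_div_iff₀ hnpos]; linarith
      have h2' : ((m n : ℝ) + 1) / n - 1 / n = (m n : ℝ) / n := by ring
      linarith
    · have h1' : (m n : ℝ) / n ≤ d / c := by
        rw [div_le_iff₀ hnpos]; linarith
      have : (0:ℝ) ≤ 1 / n := by positivity
      linarith
  -- bounds from logs
  have hlogB : ∀ n : ℕ, 1 ≤ n →
      (m n : ℝ) * Real.log 2 ≤ n * Real.log N ∧
        (n : ℝ) * Real.log N < ((m n : ℝ) + 1) * Real.log 2 := by
    intro n hn
    obtain ⟨h1, h2⟩ := hm n
    have h1' : ((2:ℝ)) ^ (m n) ≤ (N:ℝ) ^ n := by exact_mod_cast h1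
    have h2' : (N:ℝ) ^ n < (2:ℝ) ^ (m n + 1) := by exact_mod_cast h2
    have hNpos : (0:ℝ) < (N:ℝ) ^ n := by positivity
    constructor
    · have := Real.log_le_log (by positivity) h1'
      simpa [Real.log_pow] using this
    · have := Real.log_lt_log hNpos h2'
      simpa [Real.log_pow, add_mul] using this
  -- bounds from S
  have hSB : ∀ n : ℕ, 1 ≤ n →
      (m n : ℝ) * S 2 ≤ n * S N ∧ (n : ℝ) * S N < ((m n : ℝ) + 1) * S 2 := by
    intro n hn
    obtain ⟨h1, h2⟩ := hm n
    have hS2pow : ∀ k : ℕ, S (2 ^ k) = k * S 2 := by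
      intro k
      rcases Nat.eq_zero_or_pos k with hk | hk
      · simp [hk, hS1]
      · exact hpow 2 k (by norm_num) hk
    have hSN : S (N ^ n) = n * S N := hpow N n (by omega) hn
    constructor
    · have := hmono.monotone h1
      rw [hS2pow, hSN] at this; exact this
    · have := hmono h2
      rw [hS2pow, hSN] at this
      simpa [add_mul] using this
  have hTL : Tendsto (fun n : ℕ => (m n : ℝ) / n) atTop (nhds L) := key _ _ hlog2 hlogB
  have hTr : Tendsto (fun n : ℕ => (m n : ℝ) / n) atTop (nhds r) := key _ _ hS2 hSB
  have hrL : r = L := tendsto_nhds_unique hTr hTL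
  refine ⟨hTL, ?_⟩
  rw [hr, div_eq_iff (ne_of_gt hS2)] at hrL
  rw [hrL]; ring
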